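/- arXiv:1303.0309 — 2 statements merged into one kernel-verified Lean document; each statement's English description precedes it below -/
import Mathlib

section
/- For the Gaussian RBF kernel k_σ(x,y) = exp(−‖x−y‖²/(2σ²)) on ℝ^d and one-dimensional Gaussian measures P_i = N(m_i, s_i²) and P_j = N(m_j, s_j²) on ℝ, the expected kernel satisfies ∬ k_σ(x,y) dP_i(x) dP_j(y) = exp(−(m_i−m_j)²/(2(s_i²+s_j²+σ²))) / √((s_i²+s_j²+σ²)/σ²). -/
open MeasureTheory ProbabilityTheory Real
open scoped ENNReal NNReal

lemma key_integral (m c : ℝ) (v : NNReal) (τ : ℝ) (hτ : 0 < τ) :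
    ∫ y, exp (-(c - y) ^ 2 / (2 * τ ^ 2)) ∂(gaussianReal m v)
      = exp (-(m - c) ^ 2 / (2 * ((v : ℝ) + τ ^ 2)))
        * Real.sqrt (τ ^ 2 / ((v : ℝ) + τ ^ 2)) := by
  by_cases hv : v = 0
  · subst hv
    rw [gaussianReal_zero_var, integral_dirac]
    have : (c - m) ^ 2 = (m - c) ^ 2 := by ring
    simp [this, Real.sqrt_div_self', div_self (ne_of_gt (by positivity : (0:ℝ) < τ ^ 2))]
  · have hv' : (0:ℝ) < (v : ℝ) := lt_of_le_of_ne v.coe_nonneg (by exact_mod_cast (Ne.symm hv))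
    have hvτ : (0:ℝ) < (v : ℝ) + τ ^ 2 := by positivity
    rw [gaussianReal_of_var_ne_zero _ hv]
    -- density as NNReal
    have hPDF : gaussianPDF m v = fun x => ((gaussianPDFReal m v x).toNNReal : ℝ≥0∞) := by
      ext x; rw [gaussianPDF]; rfl
    rw [hPDF, integral_withDensity_eq_integral_smul
        ((measurable_gaussianPDFReal m v).real_toNNReal) _]
    have hsmul : ∀ y : ℝ, ((gaussianPDFReal m v y).toNNReal : ℝ≥0) • exp (-(c - y) ^ 2 / (2 * τ ^ 2))
        = gaussianPDFReal m v y * exp (-(c - y) ^ 2 / (2 * τ ^ 2)) := by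
      intro y
      rw [NNReal.smul_def, smul_eq_mul, Real.coe_toNNReal _ (gaussianPDFReal_nonneg m v y)]
    simp_rw [hsmul]
    -- complete the square
    set A : ℝ := ((v : ℝ) + τ ^ 2) / (2 * (v : ℝ) * τ ^ 2) with hA
    set B : ℝ := (m * τ ^ 2 + c * (v : ℝ)) / ((v : ℝ) + τ ^ 2) with hB
    have hApos : 0 < A := by positivity
    have hexp : ∀ y : ℝ, exp (-(y - m) ^ 2 / (2 * (v : ℝ))) * exp (-(c - y) ^ 2 / (2 * τ ^ 2))
        = exp (-(m - c) ^ 2 / (2 * ((v : ℝ) + τ ^ 2))) * exp (-A * (y - B) ^ 2) := by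
      intro y
      rw [← Real.exp_add, ← Real.exp_add]
      congr 1
      rw [hA, hB]
      field_simp
      ring
    have hfun : ∀ y : ℝ, gaussianPDFReal m v y * exp (-(c - y) ^ 2 / (2 * τ ^ 2))
        = (√(2 * π * v))⁻¹ * exp (-(m - c) ^ 2 / (2 * ((v : ℝ) + τ ^ 2)))
          * exp (-A * (y - B) ^ 2) := by
      intro y
      rw [gaussianPDFReal, mul_assoc, hexp y, ← mul_assoc]
    simp_rw [hfun]
    rw [integral_const_mul, integral_sub_right_eq_self (fun y => exp (-A * y ^ 2)) B,
      integral_gaussian]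
    have hconst : (√(2 * π * v))⁻¹ * √(π / A) = Real.sqrt (τ ^ 2 / ((v : ℝ) + τ ^ 2)) := by
      rw [← Real.sqrt_inv, ← Real.sqrt_mul (by positivity)]
      congr 1
      rw [hA]
      field_simp
    rw [← hconst]; ring

/-- For the Gaussian RBF kernel `k_σ(x,y) = exp(−(x−y)²/(2σ²))` on ℝ
and Gaussian measures `P_i = N(m_i, s_i²)`, `P_j = N(m_j, s_j²)`,
`∬ k_σ dP_i dP_j = exp(−(m_i−m_j)²/(2(s_i²+s_j²+σ²))) / √((s_i²+s_j²+σ²)/σ²)`. -/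
theorem expected_gaussian_kernel_of_gaussians
    (σ : ℝ) (hσ : 0 < σ) (mi mj : ℝ) (si sj : NNReal) :
    ∫ x, (∫ y, exp (-(x - y) ^ 2 / (2 * σ ^ 2)) ∂(gaussianReal mj (sj ^ 2)))
        ∂(gaussianReal mi (si ^ 2))
      = exp (-(mi - mj) ^ 2 / (2 * ((si : ℝ) ^ 2 + (sj : ℝ) ^ 2 + σ ^ 2)))
        / Real.sqrt (((si : ℝ) ^ 2 + (sj : ℝ) ^ 2 + σ ^ 2) / σ ^ 2) := by
  have hsj : ((sj ^ 2 : NNReal) : ℝ) = (sj : ℝ) ^ 2 := by push_cast; ring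
  have hsi : ((si ^ 2 : NNReal) : ℝ) = (si : ℝ) ^ 2 := by push_cast; ring
  set τ' : ℝ := Real.sqrt ((sj : ℝ) ^ 2 + σ ^ 2) with hτ'
  have hτ'pos : 0 < τ' := Real.sqrt_pos.mpr (by positivity)
  have hτ'sq : τ' ^ 2 = (sj : ℝ) ^ 2 + σ ^ 2 := Real.sq_sqrt (by positivity)
  have hinner : ∀ x : ℝ, ∫ y, exp (-(x - y) ^ 2 / (2 * σ ^ 2)) ∂(gaussianReal mj (sj ^ 2))
      = exp (-(x - mj) ^ 2 / (2 * τ' ^ 2)) * Real.sqrt (σ ^ 2 / ((sj : ℝ) ^ 2 + σ ^ 2)) := by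
    intro x
    rw [key_integral mj x (sj ^ 2) σ hσ, hsj]
    have : (mj - x) ^ 2 = (x - mj) ^ 2 := by ring
    rw [this, hτ'sq]
  simp_rw [hinner]
  rw [integral_mul_const]
  have : ∫ x, exp (-(x - mj) ^ 2 / (2 * τ' ^ 2)) ∂(gaussianReal mi (si ^ 2))
      = ∫ x, exp (-(mj - x) ^ 2 / (2 * τ' ^ 2)) ∂(gaussianReal mi (si ^ 2)) := by
    congr 1; ext x; congr 2; ring
  rw [this, key_integral mi mj (si ^ 2) τ' hτ'pos, hsi, hτ'sq]
  set S : ℝ := (si : ℝ) ^ 2 + (sj : ℝ) ^ 2 + σ ^ 2 with hS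
  have hSpos : 0 < S := by positivity
  have h1 : (si : ℝ) ^ 2 + ((sj : ℝ) ^ 2 + σ ^ 2) = S := by rw [hS]; ring
  rw [h1, mul_assoc, div_eq_mul_inv]
  congr 1
  rw [← Real.sqrt_mul (by positivity), ← Real.sqrt_inv]
  congr 1
  field_simp
end

section
/- Minimum enclosing sphere on the unit sphere equals max-margin separation from origin: for unit vectors v_1,…,v_n in a real Hilbert space whose convex hull does not contain 0, the center c* of the minimum enclosing ball of {v_1,…,v_n} restricted to the convex hull (i.e., the minimizer of max_i ‖v_i − c‖ over c ∈ conv{v_i}) is a positive scalar multiple of the minimum norm point w* of conv{v_1,…,v_n}. -/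
open scoped RealInnerProductSpace

/-- For unit vectors `v_1,…,v_n` in a real Hilbert space whose
convex hull does not contain `0`, the minimizer over the convex hull of the
enclosing-ball radius `max_i ‖v_i − c‖` is a positive scalar multiple of the
minimum norm point of the convex hull. -/
theorem mes_center_eq_scaled_min_norm_point
    {H : Type*} [NormedAddCommGroup H] [InnerProductSpace ℝ H] [CompleteSpace H]
    (n : ℕ) (hn : 0 < n) (v : Fin n → H) (hunit : ∀ i, ‖v i‖ = 1)
    (h0 : (0 : H) ∉ convexHull ℝ (Set.range v))
    (w : H) (hw : w ∈ convexHull ℝ (Set.range v))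
    (hwmin : ∀ q ∈ convexHull ℝ (Set.range v), ‖w‖ ≤ ‖q‖)
    (c : H) (hc : c ∈ convexHull ℝ (Set.range v))
    (hcmin : ∀ c' ∈ convexHull ℝ (Set.range v),
      (⨆ i, ‖v i - c‖) ≤ ⨆ i, ‖v i - c'‖) :
    ∃ t : ℝ, 0 < t ∧ c = t • w := by
  haveI : Nonempty (Fin n) := ⟨⟨0, hn⟩⟩
  haveI hKne : Nonempty ↥(convexHull ℝ (Set.range v)) := ⟨⟨w, hw⟩⟩
  set K := convexHull ℝ (Set.range v) with hK
  have hKconv : Convex ℝ K := convex_convexHull ℝ _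
  -- variational inequality: ∀ q ∈ K, ⟪w, q - w⟫ ≥ 0
  have hvar : ∀ q ∈ K, (0:ℝ) ≤ ⟪w, q - w⟫ := by
    have hinf : ‖(0:H) - w‖ = ⨅ q : K, ‖(0:H) - q‖ := by
      apply le_antisymm
      · apply le_ciInf
        intro ⟨q, hq⟩
        simpa using hwmin q hq
      · exact ciInf_le ⟨0, fun _ ⟨_, h⟩ => h ▸ norm_nonneg _⟩ (⟨w, hw⟩ : K)
    have := (norm_eq_iInf_iff_real_inner_le_zero hKconv hw).mp hinf
    intro q hq
    have h2 := this q hq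
    have : ⟪(0:H) - w, q - w⟫ = -⟪w, q - w⟫ := by
      rw [zero_sub, inner_neg_left]
    linarith [h2, this ▸ h2]
  -- for each i, ⟪v i, w⟫ ≥ ‖w‖²
  have hiw : ∀ i, ‖w‖ ^ 2 ≤ ⟪v i, w⟫ := by
    intro i
    have hvi : v i ∈ K := subset_convexHull ℝ _ ⟨i, rfl⟩
    have := hvar (v i) hvi
    have hexp : ⟪w, v i - w⟫ = ⟪v i, w⟫ - ‖w‖ ^ 2 := by
      rw [inner_sub_right, real_inner_self_eq_norm_sq, real_inner_comm]
    linarith [hexp ▸ this]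
  -- each ‖v i - w‖² ≤ 1 - ‖w‖²
  have hbw : ∀ i, ‖v i - w‖ ^ 2 ≤ 1 - ‖w‖ ^ 2 := by
    intro i
    have := hiw i
    have hexp : ‖v i - w‖ ^ 2 = ‖v i‖ ^ 2 - 2 * ⟪v i, w⟫ + ‖w‖ ^ 2 :=
      norm_sub_sq_real _ _
    rw [hexp, hunit i]
    linarith
  -- choose j minimizing ⟪v j, c⟫
  obtain ⟨j, hj⟩ := Finite.exists_min (fun i => ⟪v i, c⟫)
  -- ⟪v j, c⟫ ≤ ⟪w, c⟫ via halfspace containing the hull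
  have hjw : ⟪v j, c⟫ ≤ ⟪w, c⟫ := by
    have hlin : IsLinearMap ℝ (fun x : H => ⟪x, c⟫) :=
      ⟨fun x y => inner_add_left _ _ _, fun t x => real_inner_smul_left _ _ _⟩
    have hsub : K ⊆ {x : H | ⟪v j, c⟫ ≤ ⟪x, c⟫} := by
      apply convexHull_min _ (convex_halfSpace_ge hlin _)
      rintro x ⟨i, rfl⟩
      exact hj i
    exact hsub hw
  -- sup bounds
  set Sc := ⨆ i, ‖v i - c‖ with hSc
  set Sw := ⨆ i, ‖v i - w‖ with hSw
  have hScw : Sc ≤ Sw := hcmin w hw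
  have hSwb : Sw ^ 2 ≤ 1 - ‖w‖ ^ 2 := by
    obtain ⟨i0, hi0⟩ := Finite.exists_max (fun i => ‖v i - w‖)
    have hSweq : Sw = ‖v i0 - w‖ :=
      le_antisymm (ciSup_le hi0)
        (le_ciSup (f := fun i => ‖v i - w‖) (Set.Finite.bddAbove (Set.finite_range _)) i0)
    rw [hSweq]; exact hbw i0
  have hjc : ‖v j - c‖ ≤ Sc :=
    le_ciSup (f := fun i => ‖v i - c‖) (Set.Finite.bddAbove (Set.finite_range _)) j
  have hjc2 : ‖v j - c‖ ^ 2 ≤ Sw ^ 2 := by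
    have h1 : ‖v j - c‖ ≤ Sw := le_trans hjc hScw
    have h2 : (0:ℝ) ≤ ‖v j - c‖ := norm_nonneg _
    nlinarith
  -- lower bound on ‖v j - c‖²
  have hlow : 1 - ‖w‖ ^ 2 + ‖c - w‖ ^ 2 ≤ ‖v j - c‖ ^ 2 := by
    have hexp : ‖v j - c‖ ^ 2 = ‖v j‖ ^ 2 - 2 * ⟪v j, c⟫ + ‖c‖ ^ 2 :=
      norm_sub_sq_real _ _
    have hexp2 : ‖c - w‖ ^ 2 = ‖c‖ ^ 2 - 2 * ⟪c, w⟫ + ‖w‖ ^ 2 :=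
      norm_sub_sq_real _ _
    have hcomm : ⟪w, c⟫ = ⟪c, w⟫ := real_inner_comm _ _
    rw [hexp, hunit j, hexp2]
    linarith [hjw, hcomm ▸ hjw]
  have hcw : c = w := by
    have : ‖c - w‖ ^ 2 ≤ 0 := by linarith
    have : ‖c - w‖ = 0 := by nlinarith [norm_nonneg (c - w)]
    have := norm_eq_zero.mp this
    exact sub_eq_zero.mp this
  exact ⟨1, one_pos, by rw [hcw, one_smul]⟩
end
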